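/- Let Q₀ and Q₁ be probability measures with likelihood ratio L = dQ₁/dQ₀. Then for all t > 0: Q₀(L ≥ t) ≤ (1/t)·Q₁(L ≥ t) − (1/(2t))·Q₁(L ≥ 2t). -/
import Mathlib


open MeasureTheory

lemma aux_mul_le {α : Type*} [MeasurableSpace α] (Q0 Q1 : Measure α)
    [IsProbabilityMeasure Q0] [IsProbabilityMeasure Q1]
    (h10 : Q1 ≪ Q0) (c : ENNReal) (s : Set α)
    (hs : ∀ x ∈ s, c ≤ Q1.rnDeriv Q0 x) :
    c * Q0 s ≤ Q1 s := by
  calc c * Q0 s = ∫⁻ _ in s, c ∂Q0 := (setLIntegral_const s c).symm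
    _ ≤ ∫⁻ x in s, Q1.rnDeriv Q0 x ∂Q0 := setLIntegral_mono_ae
        (Measure.measurable_rnDeriv _ _).aemeasurable (Filter.Eventually.of_forall hs)
    _ ≤ Q1 s := Measure.setLIntegral_rnDeriv_le s

/-- For mutually absolutely continuous probability measures with likelihood ratio
L = dQ₁/dQ₀: Q₀(L ≥ t) ≤ (1/t)·Q₁(L ≥ t) − (1/(2t))·Q₁(L ≥ 2t) for all t > 0. -/
theorem stmt_3 {α : Type*} [MeasurableSpace α] (Q0 Q1 : Measure α)
    [IsProbabilityMeasure Q0] [IsProbabilityMeasure Q1]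
    (h01 : Q0 ≪ Q1) (h10 : Q1 ≪ Q0) (t : ℝ) (ht : 0 < t) :
    (Q0 {x | ENNReal.ofReal t ≤ Q1.rnDeriv Q0 x}).toReal ≤
      (1 / t) * (Q1 {x | ENNReal.ofReal t ≤ Q1.rnDeriv Q0 x}).toReal -
        (1 / (2 * t)) * (Q1 {x | ENNReal.ofReal (2 * t) ≤ Q1.rnDeriv Q0 x}).toReal := by
  set L := Q1.rnDeriv Q0 with hL
  have hLm : Measurable L := Measure.measurable_rnDeriv _ _
  set A : Set α := {x | ENNReal.ofReal t ≤ L x} with hA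
  set B : Set α := {x | ENNReal.ofReal (2 * t) ≤ L x} with hB
  have hAm : MeasurableSet A := hLm measurableSet_Ici
  have hBm : MeasurableSet B := hLm measurableSet_Ici
  have hBA : B ⊆ A := fun x hx => le_trans
    (ENNReal.ofReal_le_ofReal (by linarith)) hx
  -- split A into A \ B and B
  have hsplit0 : Q0 A = Q0 (A \ B) + Q0 B := by
    rw [← measure_diff_add_inter A hBm, Set.inter_eq_right.mpr hBA]
  have hsplit1 : Q1 A = Q1 (A \ B) + Q1 B := by
    rw [← measure_diff_add_inter A hBm, Set.inter_eq_right.mpr hBA]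
  have h1 : ENNReal.ofReal t * Q0 (A \ B) ≤ Q1 (A \ B) :=
    aux_mul_le Q0 Q1 h10 _ _ (fun x hx => hx.1)
  have h2 : ENNReal.ofReal (2 * t) * Q0 B ≤ Q1 B :=
    aux_mul_le Q0 Q1 h10 _ _ (fun x hx => hx)
  have hfin : ∀ (Q : Measure α) [IsProbabilityMeasure Q] (s : Set α), Q s ≠ ⊤ :=
    fun Q _ s => measure_ne_top Q s
  -- convert to reals
  have h1' : t * (Q0 (A \ B)).toReal ≤ (Q1 (A \ B)).toReal := by
    have := ENNReal.toReal_mono (hfin Q1 _) h1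
    rwa [ENNReal.toReal_mul, ENNReal.toReal_ofReal ht.le] at this
  have h2' : (2 * t) * (Q0 B).toReal ≤ (Q1 B).toReal := by
    have := ENNReal.toReal_mono (hfin Q1 _) h2
    rwa [ENNReal.toReal_mul, ENNReal.toReal_ofReal (by linarith)] at this
  have e0 : (Q0 A).toReal = (Q0 (A \ B)).toReal + (Q0 B).toReal := by
    rw [hsplit0, ENNReal.toReal_add (hfin Q0 _) (hfin Q0 _)]
  have e1 : (Q1 A).toReal = (Q1 (A \ B)).toReal + (Q1 B).toReal := by
    rw [hsplit1, ENNReal.toReal_add (hfin Q1 _) (hfin Q1 _)]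
  rw [e0, e1]
  have ht2 : (0:ℝ) < 2 * t := by linarith
  have i1 : (Q0 (A \ B)).toReal ≤ (1 / t) * (Q1 (A \ B)).toReal := by
    rw [div_mul_eq_mul_div, le_div_iff₀ ht]; linarith
  have i2 : (Q0 B).toReal ≤ (1 / (2 * t)) * (Q1 B).toReal := by
    rw [div_mul_eq_mul_div, le_div_iff₀ ht2]; linarith
  have : (1 / t) * ((Q1 (A \ B)).toReal + (Q1 B).toReal) -
      (1 / (2 * t)) * (Q1 B).toReal =
      (1 / t) * (Q1 (A \ B)).toReal + (1 / (2 * t)) * (Q1 B).toReal := by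
    field_simp; ring
  rw [this]
  linarith
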